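/- For all subnormalized states ρ and σ on a finite-dimensional Hilbert space A, the purified distance P(ρ,σ) = sqrt(1 − F̄(ρ,σ)²), where F̄(ρ,σ) = F(ρ,σ) + sqrt((1−tr ρ)(1−tr σ)) is the generalized fidelity, satisfies (1/2)·‖ρ − σ‖₁ ≤ P(ρ,σ) ≤ sqrt(‖ρ − σ‖₁ + |tr ρ − tr σ|). -/

import Mathlib

open scoped Classical Kronecker ComplexOrder

noncomputable section

namespace QIT

variable {ι κ γ : Type*} [Fintype ι] [DecidableEq ι] [Fintype κ] [DecidableEq κ]
  [Fintype γ] [DecidableEq γ]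

/-- Old Mathlib `Matrix.PosSemidef.sqrt` (removed), spelled out with its Dec 2024 definition. -/
def psdSqrt {A : Matrix ι ι ℂ} (hA : A.PosSemidef) : Matrix ι ι ℂ :=
  hA.1.eigenvectorUnitary.1 * Matrix.diagonal ((↑) ∘ (√·) ∘ hA.1.eigenvalues) *
  (star hA.1.eigenvectorUnitary : Matrix ι ι ℂ)

/-- Trace norm `‖A‖₁ = tr √(AᴴA)`. -/
def traceNorm (A : Matrix ι ι ℂ) : ℝ :=
  (psdSqrt (Matrix.posSemidef_conjTranspose_mul_self A)).trace.re

/-- Matrix square root (of a PSD matrix; junk value `0` otherwise). -/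
def msqrt (A : Matrix ι ι ℂ) : Matrix ι ι ℂ :=
  if h : A.PosSemidef then psdSqrt h else 0

/-- Fidelity `F(ρ,σ) = ‖√ρ√σ‖₁`. -/
def fidelity (ρ σ : Matrix ι ι ℂ) : ℝ := traceNorm (msqrt ρ * msqrt σ)

/-- Generalized fidelity. -/
def genFid (ρ σ : Matrix ι ι ℂ) : ℝ :=
  fidelity ρ σ + Real.sqrt ((1 - ρ.trace.re) * (1 - σ.trace.re))

/-- Purified distance. -/
def purifiedDist (ρ σ : Matrix ι ι ℂ) : ℝ := Real.sqrt (1 - genFid ρ σ ^ 2)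

def IsSubnormalized (ρ : Matrix ι ι ℂ) : Prop := ρ.PosSemidef ∧ ρ.trace.re ≤ 1

def IsDensity (ρ : Matrix ι ι ℂ) : Prop := ρ.PosSemidef ∧ ρ.trace = 1

/-- Max-relative entropy `D_max(ρ‖σ) = inf {λ : 2^λ σ ≥ ρ}`. -/
def Dmax (ρ σ : Matrix ι ι ℂ) : ℝ :=
  sInf {l : ℝ | ((((2:ℝ) ^ l : ℝ) : ℂ) • σ - ρ).PosSemidef}

/-- Partial trace over the first factor. -/
def ptrace₁ (ρ : Matrix (ι × κ) (ι × κ) ℂ) : Matrix κ κ ℂ :=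
  Matrix.of fun (b b' : κ) => ∑ a, ρ (a, b) (a, b')

/-- Partial trace over the second factor. -/
def ptrace₂ (ρ : Matrix (ι × κ) (ι × κ) ℂ) : Matrix ι ι ℂ :=
  Matrix.of fun (a a' : ι) => ∑ b, ρ (a, b) (a', b)

/-- Max-information `I_max(A:B)_ρ = inf_{σ_B} D_max(ρ_{AB}‖ρ_A ⊗ σ_B)`. -/
def Imax (ρ : Matrix (ι × κ) (ι × κ) ℂ) : ℝ :=
  sInf {x : ℝ | ∃ σ : Matrix κ κ ℂ, IsDensity σ ∧ x = Dmax ρ (ptrace₂ ρ ⊗ₖ σ)}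

/-- Conditional min-entropy `H_min(A|B)_ρ = −inf_{σ_B} D_max(ρ_{AB}‖Id_A ⊗ σ_B)`. -/
def HminCond (ρ : Matrix (ι × κ) (ι × κ) ℂ) : ℝ :=
  - sInf {x : ℝ | ∃ σ : Matrix κ κ ℂ, IsDensity σ ∧ x = Dmax ρ ((1 : Matrix ι ι ℂ) ⊗ₖ σ)}

/-- Largest eigenvalue (operator norm for PSD matrices). -/
def maxEig (ρ : Matrix ι ι ℂ) : ℝ :=
  if h : ρ.IsHermitian then ⨆ i, h.eigenvalues i else 0

/-- Zero-Rényi entropy `H₀ = log rank`. -/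
def H0 (ρ : Matrix ι ι ℂ) : ℝ := Real.logb 2 ρ.rank

/-- Min-entropy `H_min = −log ‖ρ‖_∞`. -/
def Hmin (ρ : Matrix ι ι ℂ) : ℝ := - Real.logb 2 (maxEig ρ)

/-- Max-entropy `H_max = 2 log tr √ρ`. -/
def Hmax (ρ : Matrix ι ι ℂ) : ℝ := 2 * Real.logb 2 (msqrt ρ).trace.re

def smoothH0 (ε : ℝ) (ρ : Matrix ι ι ℂ) : ℝ :=
  sInf {x : ℝ | ∃ σ : Matrix ι ι ℂ, IsSubnormalized σ ∧ purifiedDist σ ρ ≤ ε ∧ x = H0 σ}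

def smoothHmax (ε : ℝ) (ρ : Matrix ι ι ℂ) : ℝ :=
  sInf {x : ℝ | ∃ σ : Matrix ι ι ℂ, IsSubnormalized σ ∧ purifiedDist σ ρ ≤ ε ∧ x = Hmax σ}

def smoothImax (ε : ℝ) (ρ : Matrix (ι × κ) (ι × κ) ℂ) : ℝ :=
  sInf {x : ℝ | ∃ σ : Matrix (ι × κ) (ι × κ) ℂ,
    IsSubnormalized σ ∧ purifiedDist σ ρ ≤ ε ∧ x = Imax σ}


set_option linter.unusedSectionVars false
set_option maxHeartbeats 1000000

section Helpers
open Matrix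

variable {ι : Type*} [Fintype ι] [DecidableEq ι]

lemma trace_ct_self_re_nonneg (Y : Matrix ι ι ℂ) : 0 ≤ (Yᴴ * Y).trace.re := by
  rw [Matrix.trace]
  simp only [Matrix.diag, Matrix.mul_apply, Matrix.conjTranspose_apply]
  rw [Complex.re_sum]
  refine Finset.sum_nonneg fun i _ => ?_
  rw [Complex.re_sum]
  refine Finset.sum_nonneg fun j _ => ?_
  have : (starRingEnd ℂ) (Y j i) * Y j i = (Complex.normSq (Y j i) : ℂ) := by
    rw [mul_comm, Complex.mul_conj]
  rw [RCLike.star_def, this]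
  simpa using Complex.normSq_nonneg _

lemma psd_diag_re_nonneg {M : Matrix ι ι ℂ} (hM : M.PosSemidef) (i : ι) : 0 ≤ (M i i).re := by
  exact (Complex.le_def.mp hM.diag_nonneg).1

lemma psd_trace_re_nonneg {M : Matrix ι ι ℂ} (hM : M.PosSemidef) : 0 ≤ M.trace.re := by
  rw [Matrix.trace, Complex.re_sum]
  exact Finset.sum_nonneg fun i _ => psd_diag_re_nonneg hM i


variable {ι : Type*} [Fintype ι] [DecidableEq ι]

lemma gram_diag_re (A : Matrix ι ι ℂ) (i : ι) :
    ((Aᴴ * A) i i).re = ∑ k, ‖A k i‖ ^ 2 := by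
  simp only [Matrix.mul_apply, Matrix.conjTranspose_apply, Complex.re_sum]
  refine Finset.sum_congr rfl fun k _ => ?_
  rw [RCLike.star_def, mul_comm, Complex.mul_conj]
  simp [Complex.sq_norm]

lemma entry_abs_le (A B : Matrix ι ι ℂ) (i j : ι) :
    ‖(Aᴴ * B) i j‖ ≤
      Real.sqrt ((Aᴴ * A) i i).re * Real.sqrt ((Bᴴ * B) j j).re := by
  let x : EuclideanSpace ℂ ι := WithLp.toLp 2 (fun k => A k i)
  let y : EuclideanSpace ℂ ι := WithLp.toLp 2 (fun k => B k j)
  have h := norm_inner_le_norm (𝕜 := ℂ) x y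
  have hinner : (inner ℂ x y : ℂ) = (Aᴴ * B) i j := by
    simp [PiLp.inner_apply, Matrix.mul_apply, Matrix.conjTranspose_apply, x, y,
      RCLike.inner_apply, mul_comm]
  have hx : ‖x‖ = Real.sqrt ((Aᴴ * A) i i).re := by
    rw [EuclideanSpace.norm_eq, gram_diag_re]
  have hy : ‖y‖ = Real.sqrt ((Bᴴ * B) j j).re := by
    rw [EuclideanSpace.norm_eq, gram_diag_re]
  rw [hinner, hx, hy] at h
  simpa using h

lemma trace_prod_sum (A B : Matrix ι ι ℂ) :
    (Aᴴ * B).trace = ∑ p : ι × ι, (starRingEnd ℂ) (A p.1 p.2) * B p.1 p.2 := by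
  rw [Matrix.trace, Fintype.sum_prod_type]
  simp only [Matrix.diag, Matrix.mul_apply, Matrix.conjTranspose_apply, RCLike.star_def]
  exact Finset.sum_comm

lemma trace_abs_le (A B : Matrix ι ι ℂ) :
    ‖(Aᴴ * B).trace‖ ≤
      Real.sqrt ((Aᴴ * A).trace.re) * Real.sqrt ((Bᴴ * B).trace.re) := by
  let x : EuclideanSpace ℂ (ι × ι) := WithLp.toLp 2 (fun p : ι × ι => A p.1 p.2)
  let y : EuclideanSpace ℂ (ι × ι) := WithLp.toLp 2 (fun p : ι × ι => B p.1 p.2)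
  have h := norm_inner_le_norm (𝕜 := ℂ) x y
  have hinner : (inner ℂ x y : ℂ) = (Aᴴ * B).trace := by
    rw [trace_prod_sum]
    simp [PiLp.inner_apply, RCLike.inner_apply, x, y, mul_comm]
  have htr : ∀ C : Matrix ι ι ℂ, (Cᴴ * C).trace.re = ∑ p : ι × ι, ‖C p.1 p.2‖ ^ 2 := by
    intro C
    rw [Matrix.trace, Complex.re_sum, Fintype.sum_prod_type]
    simp only [Matrix.diag, gram_diag_re]
    exact Finset.sum_comm
  have hx : ‖x‖ = Real.sqrt ((Aᴴ * A).trace.re) := by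
    rw [EuclideanSpace.norm_eq, htr]
  have hy : ‖y‖ = Real.sqrt ((Bᴴ * B).trace.re) := by
    rw [EuclideanSpace.norm_eq, htr]
  rw [hinner, hx, hy] at h
  simpa using h


variable {ι : Type*} [Fintype ι] [DecidableEq ι]

section cdiag
variable {H : Matrix ι ι ℂ} (hH : H.IsHermitian)

def cdiag (hH : H.IsHermitian) (g : ι → ℝ) : Matrix ι ι ℂ :=
  (hH.eigenvectorUnitary : Matrix ι ι ℂ) * Matrix.diagonal (fun i => (g i : ℂ)) *
    star (hH.eigenvectorUnitary : Matrix ι ι ℂ)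

lemma star_mul_self_eigU :
    star (hH.eigenvectorUnitary : Matrix ι ι ℂ) * (hH.eigenvectorUnitary : Matrix ι ι ℂ) = 1 :=
  Matrix.mem_unitaryGroup_iff'.mp (hH.eigenvectorUnitary).2

lemma mul_star_self_eigU :
    (hH.eigenvectorUnitary : Matrix ι ι ℂ) * star (hH.eigenvectorUnitary : Matrix ι ι ℂ) = 1 :=
  Matrix.mem_unitaryGroup_iff.mp (hH.eigenvectorUnitary).2

lemma cdiag_mul (g g' : ι → ℝ) :
    cdiag hH g * cdiag hH g' = cdiag hH (fun i => g i * g' i) := by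
  unfold cdiag
  set V : Matrix ι ι ℂ := (hH.eigenvectorUnitary : Matrix ι ι ℂ) with hV
  have hcancel : ∀ x : Matrix ι ι ℂ, star V * (V * x) = x := by
    intro x; rw [← mul_assoc, star_mul_self_eigU hH, one_mul]
  simp only [mul_assoc, hcancel]
  congr 1
  rw [← mul_assoc, Matrix.diagonal_mul_diagonal]
  congr 1
  ext i
  push_cast
  rfl

lemma cdiag_conjTranspose (g : ι → ℝ) : (cdiag hH g)ᴴ = cdiag hH g := by
  unfold cdiag
  rw [Matrix.conjTranspose_mul, Matrix.conjTranspose_mul, ← Matrix.star_eq_conjTranspose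
    (hH.eigenvectorUnitary : Matrix ι ι ℂ), ← Matrix.star_eq_conjTranspose, star_star,
    Matrix.diagonal_conjTranspose, mul_assoc]
  congr 1
  ext i
  simp

lemma cdiag_hermitian (g : ι → ℝ) : (cdiag hH g).IsHermitian := cdiag_conjTranspose hH g

lemma cdiag_psd {g : ι → ℝ} (hg : ∀ i, 0 ≤ g i) : (cdiag hH g).PosSemidef := by
  have hd : Matrix.PosSemidef (Matrix.diagonal (fun i => (g i : ℂ))) :=
    Matrix.PosSemidef.diagonal (fun i => Complex.zero_le_real.mpr (hg i))
  have := hd.mul_mul_conjTranspose_same (hH.eigenvectorUnitary : Matrix ι ι ℂ)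
  rwa [← Matrix.star_eq_conjTranspose] at this

lemma trace_cdiag (g : ι → ℝ) : (cdiag hH g).trace = ∑ i, (g i : ℂ) := by
  unfold cdiag
  rw [Matrix.trace_mul_cycle, star_mul_self_eigU hH, one_mul, Matrix.trace_diagonal]

lemma spectral' : H = cdiag hH hH.eigenvalues := hH.spectral_theorem

lemma cdiag_mul_self (g : ι → ℝ) :
    cdiag hH g * H = cdiag hH (fun i => g i * hH.eigenvalues i) := by
  calc cdiag hH g * H = cdiag hH g * cdiag hH hH.eigenvalues := congrArg _ (spectral' hH)
  _ = _ := cdiag_mul _ _ _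

lemma self_mul_cdiag (g : ι → ℝ) :
    H * cdiag hH g = cdiag hH (fun i => hH.eigenvalues i * g i) := by
  calc H * cdiag hH g = cdiag hH hH.eigenvalues * cdiag hH g := by rw [← spectral' hH]
  _ = _ := cdiag_mul _ _ _

lemma trace_cdiag_mul (g : ι → ℝ) (K : Matrix ι ι ℂ) :
    (cdiag hH g * K).trace = ∑ i, (g i : ℂ) *
      ((star (hH.eigenvectorUnitary : Matrix ι ι ℂ) * K *
        (hH.eigenvectorUnitary : Matrix ι ι ℂ)) i i) := by
  unfold cdiag
  set V : Matrix ι ι ℂ := (hH.eigenvectorUnitary : Matrix ι ι ℂ) with hV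
  rw [mul_assoc (V * _), Matrix.trace_mul_comm, ← mul_assoc]
  rw [Matrix.trace]
  simp only [Matrix.diag, Matrix.mul_diagonal]
  exact Finset.sum_congr rfl fun i _ => (mul_comm _ _)

end cdiag

lemma psdSqrt_psd {A : Matrix ι ι ℂ} (hA : A.PosSemidef) : (psdSqrt hA).PosSemidef :=
  cdiag_psd hA.1 (fun i => Real.sqrt_nonneg (hA.1.eigenvalues i))

lemma psdSqrt_mul_self {A : Matrix ι ι ℂ} (hA : A.PosSemidef) : psdSqrt hA * psdSqrt hA = A := by
  have hs : psdSqrt hA = cdiag hA.1 (fun i => Real.sqrt (hA.1.eigenvalues i)) := rfl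
  rw [hs, cdiag_mul]
  have h1 : (fun i => Real.sqrt (hA.1.eigenvalues i) * Real.sqrt (hA.1.eigenvalues i))
      = hA.1.eigenvalues := funext fun i => Real.mul_self_sqrt (hA.eigenvalues_nonneg i)
  rw [h1, ← spectral' hA.1]

open scoped MatrixOrder in
lemma psdSqrt_eq_cfc {A : Matrix ι ι ℂ} (hA : A.PosSemidef) : psdSqrt hA = CFC.sqrt A := by
  have hA0 : 0 ≤ A := Matrix.nonneg_iff_posSemidef.mpr hA
  rw [CFC.sqrt_eq_cfc, cfc_nnreal_eq_real _ A, hA.1.cfc_eq]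
  rw [Matrix.IsHermitian.cfc, Unitary.conjStarAlgAut_apply]
  unfold psdSqrt
  congr 3
  funext i
  simp [Real.coe_sqrt, Real.coe_toNNReal _ (hA.eigenvalues_nonneg i)]
  rw [max_eq_left (hA.eigenvalues_nonneg i)]

open scoped MatrixOrder in
lemma psdSqrt_eq_of_sq_eq {A : Matrix ι ι ℂ} (hA : A.PosSemidef) {B : Matrix ι ι ℂ}
    (hB : B.PosSemidef) (h : B ^ 2 = A) : B = psdSqrt hA := by
  have hB0 : 0 ≤ B := Matrix.nonneg_iff_posSemidef.mpr hB
  rw [psdSqrt_eq_cfc hA]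
  exact (CFC.sqrt_unique (by rw [← h, pow_two]) hB0).symm


section TraceNormLemmas

lemma traceNorm_eq_sum (X : Matrix ι ι ℂ) :
    traceNorm X = ∑ i, Real.sqrt ((Matrix.posSemidef_conjTranspose_mul_self X).1.eigenvalues i) := by
  have h := Matrix.posSemidef_conjTranspose_mul_self X
  have hs : psdSqrt h = cdiag h.1 (fun i => Real.sqrt (h.1.eigenvalues i)) := rfl
  unfold traceNorm
  rw [hs, trace_cdiag, Complex.re_sum]
  simp

lemma traceNorm_nonneg (X : Matrix ι ι ℂ) : 0 ≤ traceNorm X := by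
  rw [traceNorm_eq_sum]
  exact Finset.sum_nonneg fun i _ => Real.sqrt_nonneg _

lemma re_trace_le_traceNorm (X : Matrix ι ι ℂ) : X.trace.re ≤ traceNorm X := by
  have h := Matrix.posSemidef_conjTranspose_mul_self X
  set V : Matrix ι ι ℂ := (h.1.eigenvectorUnitary : Matrix ι ι ℂ) with hV
  have htr : (star V * X * V).trace = X.trace := by
    rw [Matrix.trace_mul_cycle, mul_star_self_eigU h.1, one_mul]
  rw [← htr, Matrix.trace, Complex.re_sum, traceNorm_eq_sum]
  refine Finset.sum_le_sum fun i _ => ?_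
  have h2 := entry_abs_le V (X * V) i i
  have hVV : Vᴴ * V = 1 := by
    rw [← Matrix.star_eq_conjTranspose]; exact star_mul_self_eigU h.1
  have h3 : (X * V)ᴴ * (X * V) = Matrix.diagonal (RCLike.ofReal ∘ h.1.eigenvalues) := by
    rw [Matrix.conjTranspose_mul, mul_assoc, ← mul_assoc Xᴴ X V, ← mul_assoc,
      show Vᴴ = star V from (Matrix.star_eq_conjTranspose V).symm]
    have := h.1.conjStarAlgAut_star_eigenvectorUnitary
    simpa [Unitary.conjStarAlgAut_apply] using this
  rw [hVV, h3] at h2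
  simp only [Matrix.one_apply_eq, Complex.one_re, Real.sqrt_one, one_mul,
    Matrix.diagonal_apply_eq, Function.comp_apply] at h2
  have h4 : (star V * X * V) i i = (Vᴴ * (X * V)) i i := by
    rw [Matrix.star_eq_conjTranspose, mul_assoc]
  rw [Matrix.diag]
  rw [h4]
  calc ((Vᴴ * (X * V)) i i).re ≤ ‖(Vᴴ * (X * V)) i i‖ := Complex.re_le_norm _
  _ ≤ _ := by simpa using h2

lemma traceNorm_hermitian {H : Matrix ι ι ℂ} (hH : H.IsHermitian) :
    traceNorm H = ∑ i, |hH.eigenvalues i| := by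
  have h := Matrix.posSemidef_conjTranspose_mul_self H
  have habs : (cdiag hH (fun i => |hH.eigenvalues i|)) = psdSqrt h := by
    apply psdSqrt_eq_of_sq_eq h (cdiag_psd hH (fun i => abs_nonneg _))
    have hsq : H * H = cdiag hH (fun i => hH.eigenvalues i * hH.eigenvalues i) := by
      conv_lhs => rw [spectral' hH]
      rw [cdiag_mul]
    rw [pow_two, cdiag_mul, show Hᴴ = H from hH.eq, hsq,
      show (fun i => |hH.eigenvalues i| * |hH.eigenvalues i|)
          = fun i => hH.eigenvalues i * hH.eigenvalues i from
        funext fun i => abs_mul_abs_self _]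
  unfold traceNorm
  rw [← habs, trace_cdiag, Complex.re_sum]
  simp

end TraceNormLemmas

section Idem

lemma psd_of_herm_idem {P : Matrix ι ι ℂ} (h1 : P.IsHermitian) (h2 : P * P = P) :
    P.PosSemidef := by
  have h : Pᴴ * P = P := by rw [h1.eq, h2]
  rw [← h]
  exact Matrix.posSemidef_conjTranspose_mul_self P

lemma one_sub_psd_of_herm_idem {P : Matrix ι ι ℂ} (h1 : P.IsHermitian) (h2 : P * P = P) :
    ((1 : Matrix ι ι ℂ) - P).PosSemidef := by
  apply psd_of_herm_idem (Matrix.isHermitian_one.sub h1)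
  have h : ((1 : Matrix ι ι ℂ) - P) * (1 - P) = 1 - P - (P - P * P) := by noncomm_ring
  rw [h, h2, sub_self, sub_zero]

lemma trace_ct_contraction (Y C : Matrix ι ι ℂ)
    (hC : ((1 : Matrix ι ι ℂ) - Cᴴ * C).PosSemidef) :
    ((C * Y)ᴴ * (C * Y)).trace.re ≤ (Yᴴ * Y).trace.re := by
  have hRR := psdSqrt_mul_self hC
  set R := psdSqrt hC with hRdef
  have hR : Rᴴ = R := (psdSqrt_psd hC).1
  have hsum : (C * Y)ᴴ * (C * Y) + (R * Y)ᴴ * (R * Y) = Yᴴ * Y := by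
    rw [Matrix.conjTranspose_mul, Matrix.conjTranspose_mul, hR]
    calc Yᴴ * Cᴴ * (C * Y) + Yᴴ * R * (R * Y) = Yᴴ * ((Cᴴ * C + R * R) * Y) := by noncomm_ring
    _ = Yᴴ * Y := by rw [hRR]; noncomm_ring
  have hpos := trace_ct_self_re_nonneg (R * Y)
  have hadd : ((C * Y)ᴴ * (C * Y)).trace.re + ((R * Y)ᴴ * (R * Y)).trace.re
      = (Yᴴ * Y).trace.re := by
    rw [← Complex.add_re, ← Matrix.trace_add, hsum]
  linarith

lemma sandwich_trace {B M : Matrix ι ι ℂ} (hB : B.IsHermitian) (hM : M.IsHermitian)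
    (hMi : M * M = M) : ((B * M)ᴴ * (B * M)).trace = (M * (B * B)).trace := by
  have h1 : (B * M)ᴴ = M * B := by rw [Matrix.conjTranspose_mul, hB.eq, hM.eq]
  rw [h1, Matrix.trace_mul_comm]
  have h2 : (B * M) * (M * B) = B * ((M * M) * B) := by noncomm_ring
  rw [h2, hMi, Matrix.trace_mul_comm, mul_assoc]

lemma trace_piece_bound {A B M : Matrix ι ι ℂ} (C : Matrix ι ι ℂ)
    (hA : A.IsHermitian) (hB : B.IsHermitian) (hM : M.IsHermitian) (hMi : M * M = M)
    (hC : ((1 : Matrix ι ι ℂ) - Cᴴ * C).PosSemidef) :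
    (C * (A * (M * B))).trace.re ≤
      Real.sqrt ((M * (A * A)).trace.re) * Real.sqrt ((M * (B * B)).trace.re) := by
  have e1 : C * (A * (M * B)) = (C * (A * M)) * (M * B) := by
    conv_lhs => rw [← hMi]
    noncomm_ring
  have e2 : ((C * (A * M)) * (M * B)).trace = ((B * M)ᴴ * (C * (A * M))).trace := by
    rw [Matrix.trace_mul_comm]
    congr 1
    rw [Matrix.conjTranspose_mul, hB.eq, hM.eq]
  have habs := trace_abs_le (B * M) (C * (A * M))
  have hBM : ((B * M)ᴴ * (B * M)).trace.re = ((M * (B * B)).trace).re := by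
    rw [sandwich_trace hB hM hMi]
  have hAM : ((C * (A * M))ᴴ * (C * (A * M))).trace.re ≤ ((M * (A * A)).trace).re := by
    calc ((C * (A * M))ᴴ * (C * (A * M))).trace.re ≤ ((A * M)ᴴ * (A * M)).trace.re :=
          trace_ct_contraction _ _ hC
    _ = _ := by rw [sandwich_trace hA hM hMi]
  calc (C * (A * (M * B))).trace.re ≤ ‖(C * (A * (M * B))).trace‖ :=
        Complex.re_le_norm _
  _ = ‖((B * M)ᴴ * (C * (A * M))).trace‖ := by rw [e1, e2]
  _ ≤ Real.sqrt (((B * M)ᴴ * (B * M)).trace.re) *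
        Real.sqrt (((C * (A * M))ᴴ * (C * (A * M))).trace.re) := habs
  _ ≤ Real.sqrt ((M * (A * A)).trace.re) * Real.sqrt ((M * (B * B)).trace.re) := by
      rw [hBM, mul_comm]
      exact mul_le_mul_of_nonneg_right (Real.sqrt_le_sqrt hAM) (Real.sqrt_nonneg _)

end Idem

section Polar
variable (X : Matrix ι ι ℂ)

def polarC (X : Matrix ι ι ℂ) : Matrix ι ι ℂ :=
  cdiag (Matrix.posSemidef_conjTranspose_mul_self X).1
    (fun i => (Real.sqrt ((Matrix.posSemidef_conjTranspose_mul_self X).1.eigenvalues i))⁻¹) * Xᴴ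

lemma trace_polarC_mul : ((polarC X) * X).trace.re = traceNorm X := by
  have h := Matrix.posSemidef_conjTranspose_mul_self X
  have h1 : polarC X * X = cdiag h.1 (fun i => (Real.sqrt (h.1.eigenvalues i))⁻¹) * (Xᴴ * X) := by
    rw [polarC, mul_assoc]
  rw [h1, cdiag_mul_self, trace_cdiag, Complex.re_sum, traceNorm_eq_sum]
  refine Finset.sum_congr rfl fun i _ => ?_
  rw [Complex.ofReal_re]
  have hd := h.eigenvalues_nonneg i
  rw [mul_comm, ← div_eq_mul_inv, Real.div_sqrt]

lemma one_sub_polarC_psd :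
    ((1 : Matrix ι ι ℂ) - (polarC X)ᴴ * polarC X).PosSemidef := by
  have h := Matrix.posSemidef_conjTranspose_mul_self X
  set e : ι → ℝ := fun i => (Real.sqrt (h.1.eigenvalues i))⁻¹ with he
  have hCt : (polarC X)ᴴ = X * cdiag h.1 e := by
    rw [polarC, Matrix.conjTranspose_mul, Matrix.conjTranspose_conjTranspose,
      cdiag_conjTranspose]
  have hP : (polarC X)ᴴ * polarC X = X * cdiag h.1 (fun i => e i * e i) * Xᴴ := by
    rw [hCt, polarC, ← cdiag_mul h.1 e e]
    noncomm_ring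
  have hPh : ((polarC X)ᴴ * polarC X).IsHermitian := by
    rw [hP]
    exact Matrix.isHermitian_mul_mul_conjTranspose X (cdiag_hermitian h.1 _)
  have hPi : ((polarC X)ᴴ * polarC X) * ((polarC X)ᴴ * polarC X) = (polarC X)ᴴ * polarC X := by
    rw [hP]
    have e1 : X * cdiag h.1 (fun i => e i * e i) * Xᴴ * (X * cdiag h.1 (fun i => e i * e i) * Xᴴ)
        = X * (cdiag h.1 (fun i => e i * e i) * ((Xᴴ * X) * cdiag h.1 (fun i => e i * e i))) * Xᴴ := by
      noncomm_ring
    have e2 : cdiag h.1 (fun i => e i * e i) * ((Xᴴ * X) * cdiag h.1 (fun i => e i * e i))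
        = cdiag h.1 (fun i => (e i * e i) * (h.1.eigenvalues i * (e i * e i))) := by
      rw [self_mul_cdiag, cdiag_mul]
    have e3 : (fun i => (e i * e i) * (h.1.eigenvalues i * (e i * e i)))
        = fun i => e i * e i := by
      funext i
      have hd := h.eigenvalues_nonneg i
      rcases eq_or_lt_of_le hd with h0 | h0
      · simp [e, ← h0]
      · have hs : Real.sqrt (h.1.eigenvalues i) > 0 := Real.sqrt_pos.mpr h0
        have hsq : Real.sqrt (h.1.eigenvalues i) * Real.sqrt (h.1.eigenvalues i)
            = h.1.eigenvalues i := Real.mul_self_sqrt hd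
        field_simp [e]
        simp only [he]
        rw [inv_pow, Real.sq_sqrt hd, inv_mul_cancel₀ h0.ne']
    rw [e1, e2, e3]
  exact one_sub_psd_of_herm_idem hPh hPi

end Polar

section Msqrt

lemma msqrt_psd {ρ : Matrix ι ι ℂ} (hρ : ρ.PosSemidef) : (msqrt ρ).PosSemidef := by
  rw [msqrt, dif_pos hρ]; exact psdSqrt_psd hρ

lemma msqrt_herm {ρ : Matrix ι ι ℂ} (hρ : ρ.PosSemidef) : (msqrt ρ).IsHermitian :=
  (msqrt_psd hρ).1

lemma msqrt_mul_self {ρ : Matrix ι ι ℂ} (hρ : ρ.PosSemidef) : msqrt ρ * msqrt ρ = ρ := by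
  rw [msqrt, dif_pos hρ]; exact psdSqrt_mul_self hρ

end Msqrt

section FidelityBound

lemma trace_idem_psd_nonneg {M ρ : Matrix ι ι ℂ} (hρ : ρ.PosSemidef)
    (hM : M.IsHermitian) (hMi : M * M = M) : 0 ≤ (M * ρ).trace.re := by
  have h1 : (M * ρ).trace = ((msqrt ρ * M)ᴴ * (msqrt ρ * M)).trace := by
    rw [sandwich_trace (msqrt_herm hρ) hM hMi, msqrt_mul_self hρ]
  rw [h1]
  exact trace_ct_self_re_nonneg _

lemma fidelity_le_split {ρ σ M : Matrix ι ι ℂ} (hρ : ρ.PosSemidef) (hσ : σ.PosSemidef)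
    (hM : M.IsHermitian) (hMi : M * M = M) :
    fidelity ρ σ ≤ Real.sqrt ((M * ρ).trace.re) * Real.sqrt ((M * σ).trace.re)
      + Real.sqrt ((((1 : Matrix ι ι ℂ) - M) * ρ).trace.re) *
          Real.sqrt ((((1 : Matrix ι ι ℂ) - M) * σ).trace.re) := by
  set A := msqrt ρ with hAdef
  set B := msqrt σ with hBdef
  have hA : A.IsHermitian := msqrt_herm hρ
  have hB : B.IsHermitian := msqrt_herm hσ
  set X := A * B with hXdef
  set C := polarC X with hCdef
  have hsplit : C * X = C * (A * (M * B)) + C * (A * (((1 : Matrix ι ι ℂ) - M) * B)) := by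
    rw [hXdef]; noncomm_ring
  have hN : ((1 : Matrix ι ι ℂ) - M).IsHermitian := Matrix.isHermitian_one.sub hM
  have hNi : ((1 : Matrix ι ι ℂ) - M) * ((1 : Matrix ι ι ℂ) - M) = (1 : Matrix ι ι ℂ) - M := by
    have h : ((1 : Matrix ι ι ℂ) - M) * (1 - M) = 1 - M - (M - M * M) := by noncomm_ring
    rw [h, hMi, sub_self, sub_zero]
  have hC := one_sub_polarC_psd X
  have b1 := trace_piece_bound (polarC X) hA hB hM hMi hC
  have b2 := trace_piece_bound (polarC X) hA hB hN hNi hC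
  have hAA : A * A = ρ := msqrt_mul_self hρ
  have hBB : B * B = σ := msqrt_mul_self hσ
  rw [hAA, hBB] at b1 b2
  have hfid : fidelity ρ σ = (C * X).trace.re := by
    rw [fidelity, ← hAdef, ← hBdef, ← hXdef, hCdef, trace_polarC_mul]
  rw [hfid, hsplit, Matrix.trace_add, Complex.add_re]
  exact add_le_add b1 b2

lemma re_trace_contraction_le {H C : Matrix ι ι ℂ} (hH : H.IsHermitian)
    (hC : ((1 : Matrix ι ι ℂ) - Cᴴ * C).PosSemidef) :
    (C * H).trace.re ≤ traceNorm H := by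
  set V : Matrix ι ι ℂ := (hH.eigenvectorUnitary : Matrix ι ι ℂ) with hV
  have h1 : (C * H).trace = (cdiag hH hH.eigenvalues * C).trace := by
    rw [Matrix.trace_mul_comm]
    exact congrArg (fun Y => (Y * C).trace) (spectral' hH)
  rw [h1, trace_cdiag_mul, Complex.re_sum, traceNorm_hermitian hH]
  refine Finset.sum_le_sum fun i _ => ?_
  have hentry : ‖(star V * C * V) i i‖ ≤ 1 := by
    have h2 := entry_abs_le V (C * V) i i
    have hVV : Vᴴ * V = 1 := by
      rw [← Matrix.star_eq_conjTranspose]; exact star_mul_self_eigU hH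
    have h3 : (C * V)ᴴ * (C * V) = Vᴴ * (Cᴴ * C) * V := by
      rw [Matrix.conjTranspose_mul]; noncomm_ring
    rw [hVV, h3] at h2
    have h4 : ((Vᴴ * (Cᴴ * C) * V) i i).re ≤ 1 := by
      have h5 : (Vᴴ * ((1 : Matrix ι ι ℂ) - Cᴴ * C) * V).PosSemidef := by
        exact hC.conjTranspose_mul_mul_same V
      have h6 := psd_diag_re_nonneg h5 i
      have h7 : Vᴴ * ((1 : Matrix ι ι ℂ) - Cᴴ * C) * V
          = Vᴴ * V - Vᴴ * (Cᴴ * C) * V := by noncomm_ring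
      rw [h7, hVV] at h6
      have h8 : ((1 - Vᴴ * (Cᴴ * C) * V : Matrix ι ι ℂ) i i).re
          = 1 - ((Vᴴ * (Cᴴ * C) * V) i i).re := by
        rw [Matrix.sub_apply, Complex.sub_re, Matrix.one_apply_eq, Complex.one_re]
      rw [h8] at h6
      linarith
    have h9 : (star V * C * V) i i = (Vᴴ * (C * V)) i i := by
      rw [Matrix.star_eq_conjTranspose, mul_assoc]
    rw [h9]
    calc ‖(Vᴴ * (C * V)) i i‖ ≤
        Real.sqrt ((1 : Matrix ι ι ℂ) i i).re * Real.sqrt (((Vᴴ * (Cᴴ * C) * V)) i i).re := h2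
    _ ≤ 1 := by
        rw [Matrix.one_apply_eq, Complex.one_re, Real.sqrt_one, one_mul]
        calc Real.sqrt ((Vᴴ * (Cᴴ * C) * V) i i).re ≤ Real.sqrt 1 := Real.sqrt_le_sqrt h4
        _ = 1 := Real.sqrt_one
  calc ((hH.eigenvalues i : ℂ) * ((star V * C * V) i i)).re
      = hH.eigenvalues i * ((star V * C * V) i i).re := by
        rw [Complex.mul_re, Complex.ofReal_re, Complex.ofReal_im]; ring
  _ ≤ |hH.eigenvalues i * ((star V * C * V) i i).re| := le_abs_self _
  _ = |hH.eigenvalues i| * |((star V * C * V) i i).re| := abs_mul _ _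
  _ ≤ |hH.eigenvalues i| * 1 := by
      refine mul_le_mul_of_nonneg_left ?_ (abs_nonneg _)
      calc |((star V * C * V) i i).re| ≤ ‖(star V * C * V) i i‖ :=
        Complex.abs_re_le_norm _
      _ ≤ 1 := hentry
  _ = |hH.eigenvalues i| := mul_one _

end FidelityBound

section PowersStormerSec

lemma cdiag_one {H : Matrix ι ι ℂ} (hH : H.IsHermitian) :
    cdiag hH (fun _ => (1 : ℝ)) = 1 := by
  rw [cdiag]
  have : (fun _ : ι => ((1 : ℝ) : ℂ)) = fun _ : ι => (1 : ℂ) := by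
    funext i; norm_num
  rw [this, Matrix.diagonal_one, mul_one, mul_star_self_eigU hH]

lemma powers_stormer {ρ σ : Matrix ι ι ℂ} (hρ : ρ.PosSemidef) (hσ : σ.PosSemidef) :
    ρ.trace.re + σ.trace.re - traceNorm (ρ - σ) ≤ 2 * (msqrt ρ * msqrt σ).trace.re := by
  set A := msqrt ρ with hAdef
  set B := msqrt σ with hBdef
  have hA : A.IsHermitian := msqrt_herm hρ
  have hB : B.IsHermitian := msqrt_herm hσ
  have hΔ : (A - B).IsHermitian := hA.sub hB
  set μ : ι → ℝ := hΔ.eigenvalues with hμ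
  set s : ι → ℝ := fun i => if 0 ≤ μ i then 1 else -1 with hs
  set G := cdiag hΔ s with hGdef
  set R := cdiag hΔ (fun i => |μ i|) with hRdef
  set V : Matrix ι ι ℂ := (hΔ.eigenvectorUnitary : Matrix ι ι ℂ) with hV
  have hGsq : Gᴴ * G = 1 := by
    rw [hGdef, cdiag_conjTranspose, cdiag_mul]
    have h1 : (fun i => s i * s i) = fun _ : ι => (1 : ℝ) := by
      funext i; rw [hs]; dsimp only; split <;> norm_num
    rw [h1, cdiag_one]
  have hcontr : ((1 : Matrix ι ι ℂ) - Gᴴ * G).PosSemidef := by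
    rw [hGsq, sub_self]
    exact Matrix.PosSemidef.zero
  have step1 : (G * (ρ - σ)).trace.re ≤ traceNorm (ρ - σ) :=
    re_trace_contraction_le (hρ.1.sub hσ.1) hcontr
  have hGΔ : G * (A - B) = R := by
    rw [hGdef, cdiag_mul_self, hRdef]
    have h1 : (fun i => s i * hΔ.eigenvalues i) = fun i => |μ i| := by
      funext i
      rw [hs]
      dsimp only
      rcases le_or_gt 0 (μ i) with h0 | h0
      · rw [if_pos h0, one_mul, abs_of_nonneg h0]
      · rw [if_neg (not_le.mpr h0), abs_of_neg h0]; ring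
    rw [h1]
  have hΔG : (A - B) * G = R := by
    rw [hGdef, self_mul_cdiag, hRdef]
    have h1 : (fun i => hΔ.eigenvalues i * s i) = fun i => |μ i| := by
      funext i
      rw [hs]
      dsimp only
      rcases le_or_gt 0 (μ i) with h0 | h0
      · rw [if_pos h0, mul_one, abs_of_nonneg h0]
      · rw [if_neg (not_le.mpr h0), abs_of_neg h0]; ring
    rw [h1]
  have hρσ : ρ - σ = A * A - B * B := by
    rw [msqrt_mul_self hρ, msqrt_mul_self hσ]
  have hsum : G * (ρ - σ) + G * (ρ - σ) = G * ((A - B) * (A + B)) + G * ((A + B) * (A - B)) := by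
    rw [hρσ]; noncomm_ring
  have t1 : (G * ((A - B) * (A + B))).trace = (R * (A + B)).trace := by
    rw [← mul_assoc, hGΔ]
  have t2 : (G * ((A + B) * (A - B))).trace = (R * (A + B)).trace := by
    rw [Matrix.trace_mul_comm, mul_assoc, Matrix.trace_mul_comm, hΔG]
  have hGR : (G * (ρ - σ)).trace.re + (G * (ρ - σ)).trace.re
      = (R * (A + B)).trace.re + (R * (A + B)).trace.re := by
    have h2 : (G * (ρ - σ)).trace + (G * (ρ - σ)).trace
        = (R * (A + B)).trace + (R * (A + B)).trace := by
      rw [← Matrix.trace_add, hsum, Matrix.trace_add, t1, t2]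
    have h3 := congrArg Complex.re h2
    simpa [Complex.add_re] using h3
  have hdiagΔ : star V * (A - B) * V = Matrix.diagonal (RCLike.ofReal ∘ μ) := by
    have := hΔ.conjStarAlgAut_star_eigenvectorUnitary
    simpa [Unitary.conjStarAlgAut_apply] using this
  have step3 : ∑ i, μ i ^ 2 ≤ (R * (A + B)).trace.re := by
    rw [hRdef, trace_cdiag_mul, Complex.re_sum]
    refine Finset.sum_le_sum fun i _ => ?_
    have hre : (((|μ i| : ℝ) : ℂ) * ((star V * (A + B) * V) i i)).re
        = |μ i| * ((star V * (A + B) * V) i i).re := by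
      rw [Complex.mul_re, Complex.ofReal_re, Complex.ofReal_im]; ring
    rw [hre]
    have hdiag_entry : ((star V * (A - B) * V) i i).re = μ i := by
      rw [hdiagΔ]
      simp
    have hplus : μ i ≤ ((star V * (A + B) * V) i i).re := by
      have hpsd : (star V * (B + B) * V).PosSemidef := by
        have := ((msqrt_psd hσ).add (msqrt_psd hσ)).conjTranspose_mul_mul_same V
        rwa [← Matrix.star_eq_conjTranspose] at this
      have h6 := psd_diag_re_nonneg hpsd i
      have h7 : star V * (B + B) * V = star V * (A + B) * V - star V * (A - B) * V := by
        noncomm_ring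
      rw [h7, Matrix.sub_apply, Complex.sub_re, hdiag_entry] at h6
      linarith
    have hminus : -μ i ≤ ((star V * (A + B) * V) i i).re := by
      have hpsd : (star V * (A + A) * V).PosSemidef := by
        have := ((msqrt_psd hρ).add (msqrt_psd hρ)).conjTranspose_mul_mul_same V
        rwa [← Matrix.star_eq_conjTranspose] at this
      have h6 := psd_diag_re_nonneg hpsd i
      have h7 : star V * (A + A) * V = star V * (A + B) * V + star V * (A - B) * V := by
        noncomm_ring
      rw [h7, Matrix.add_apply, Complex.add_re, hdiag_entry] at h6
      linarith
    have habs : |μ i| ≤ ((star V * (A + B) * V) i i).re := abs_le.mpr ⟨by linarith, hplus⟩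
    calc μ i ^ 2 = |μ i| * |μ i| := by rw [← sq_abs]; ring
    _ ≤ |μ i| * ((star V * (A + B) * V) i i).re :=
        mul_le_mul_of_nonneg_left habs (abs_nonneg _)
  have step4 : ((A - B) * (A - B)).trace.re = ∑ i, μ i ^ 2 := by
    have e1 : ((A - B) * (A - B)).trace = ((A - B) * cdiag hΔ μ).trace :=
      congrArg (fun Y => ((A - B) * Y).trace) (spectral' hΔ)
    rw [e1, self_mul_cdiag, trace_cdiag, Complex.re_sum]
    refine Finset.sum_congr rfl fun i _ => ?_
    push_cast
    rw [Complex.mul_re]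
    simp [pow_two, hμ]
  have expand : ((A - B) * (A - B)).trace.re
      = ρ.trace.re + σ.trace.re - 2 * (A * B).trace.re := by
    have e2 : (A - B) * (A - B) = A * A + B * B - (A * B + B * A) := by noncomm_ring
    have e3 := congrArg (fun Y => Y.trace.re) e2
    simp only [Matrix.trace_sub, Matrix.trace_add, Complex.sub_re, Complex.add_re] at e3
    rw [msqrt_mul_self hρ, msqrt_mul_self hσ, Matrix.trace_mul_comm B A] at e3
    rw [e3]; ring
  linarith [step1, hGR, step3, step4, expand]

end PowersStormerSec

section RealLemmas

lemma min_le_sqrt_mul {x y : ℝ} (hx : 0 ≤ x) (hy : 0 ≤ y) : min x y ≤ Real.sqrt (x * y) := by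
  rcases le_total x y with h | h
  · rw [min_eq_left h]
    calc x = Real.sqrt (x * x) := (Real.sqrt_mul_self hx).symm
    _ ≤ Real.sqrt (x * y) := Real.sqrt_le_sqrt (by nlinarith)
  · rw [min_eq_right h]
    calc y = Real.sqrt (y * y) := (Real.sqrt_mul_self hy).symm
    _ ≤ Real.sqrt (x * y) := Real.sqrt_le_sqrt (by nlinarith)

lemma cs3 {x1 x2 x3 y1 y2 y3 : ℝ} (hx1 : 0 ≤ x1) (hx2 : 0 ≤ x2) (hx3 : 0 ≤ x3)
    (hy1 : 0 ≤ y1) (hy2 : 0 ≤ y2) (hy3 : 0 ≤ y3) :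
    x1 * y1 + x2 * y2 + x3 * y3
      ≤ Real.sqrt ((x1 ^ 2 + x2 ^ 2 + x3 ^ 2) * (y1 ^ 2 + y2 ^ 2 + y3 ^ 2)) := by
  rw [show (x1 * y1 + x2 * y2 + x3 * y3)
      = Real.sqrt ((x1 * y1 + x2 * y2 + x3 * y3) ^ 2) from
    (Real.sqrt_sq (by positivity)).symm]
  apply Real.sqrt_le_sqrt
  nlinarith [sq_nonneg (x1 * y2 - x2 * y1), sq_nonneg (x1 * y3 - x3 * y1),
    sq_nonneg (x2 * y3 - x3 * y2)]

lemma min_formula (p q : ℝ) : min p q = (p + q - |p - q|) / 2 := by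
  rcases le_total p q with h | h
  · rw [min_eq_left h, abs_of_nonpos (by linarith)]; ring
  · rw [min_eq_right h, abs_of_nonneg (by linarith)]; ring

lemma max_formula (p q : ℝ) : max p q = (p + q + |p - q|) / 2 := by
  rcases le_total p q with h | h
  · rw [max_eq_right h, abs_of_nonpos (by linarith)]; ring
  · rw [max_eq_left h, abs_of_nonneg (by linarith)]; ring

lemma classical_fvdg {p1 p2 p3 q1 q2 q3 F : ℝ}
    (hp1 : 0 ≤ p1) (hp2 : 0 ≤ p2) (hp3 : 0 ≤ p3)
    (hq1 : 0 ≤ q1) (hq2 : 0 ≤ q2) (hq3 : 0 ≤ q3)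
    (hp : p1 + p2 + p3 = 1) (hq : q1 + q2 + q3 = 1) (hF0 : 0 ≤ F)
    (hF : F ≤ Real.sqrt p1 * Real.sqrt q1 + Real.sqrt p2 * Real.sqrt q2
        + Real.sqrt p3 * Real.sqrt q3) :
    F ^ 2 + ((|p1 - q1| + |p2 - q2| + |p3 - q3|) / 2) ^ 2 ≤ 1 := by
  set TV := (|p1 - q1| + |p2 - q2| + |p3 - q3|) / 2 with hTV
  have key : ∀ p q : ℝ, 0 ≤ p → 0 ≤ q →
      Real.sqrt p * Real.sqrt q = Real.sqrt (min p q) * Real.sqrt (max p q) := by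
    intro p q hp hq
    rw [← Real.sqrt_mul hp, ← Real.sqrt_mul (le_min hp hq), min_mul_max]
  rw [key p1 q1 hp1 hq1, key p2 q2 hp2 hq2, key p3 q3 hp3 hq3] at hF
  have hcs := cs3 (Real.sqrt_nonneg (min p1 q1)) (Real.sqrt_nonneg (min p2 q2))
    (Real.sqrt_nonneg (min p3 q3)) (Real.sqrt_nonneg (max p1 q1))
    (Real.sqrt_nonneg (max p2 q2)) (Real.sqrt_nonneg (max p3 q3))
  rw [Real.sq_sqrt (le_min hp1 hq1), Real.sq_sqrt (le_min hp2 hq2),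
    Real.sq_sqrt (le_min hp3 hq3), Real.sq_sqrt (le_max_of_le_left hp1),
    Real.sq_sqrt (le_max_of_le_left hp2), Real.sq_sqrt (le_max_of_le_left hp3)] at hcs
  have hmins : min p1 q1 + min p2 q2 + min p3 q3 = 1 - TV := by
    rw [min_formula, min_formula, min_formula, hTV]; linarith
  have hmaxs : max p1 q1 + max p2 q2 + max p3 q3 = 1 + TV := by
    rw [max_formula, max_formula, max_formula, hTV]; linarith
  rw [hmins, hmaxs] at hcs
  have hTV1 : 1 - TV ≥ 0 := by
    have := le_min hp1 hq1
    have := le_min hp2 hq2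
    have := le_min hp3 hq3
    linarith [hmins]
  have hTV0 : 0 ≤ TV := by positivity
  have hFle : F ≤ Real.sqrt ((1 - TV) * (1 + TV)) := le_trans hF hcs
  have hF2 : F ^ 2 ≤ (1 - TV) * (1 + TV) := by
    have h2 : F ^ 2 ≤ Real.sqrt ((1 - TV) * (1 + TV)) ^ 2 := by
      exact pow_le_pow_left₀ hF0 hFle 2
    rwa [Real.sq_sqrt (by nlinarith)] at h2
  nlinarith

end RealLemmas

end Helpers

/-- Lower and upper bounds on the purified distance in terms of the trace distance. -/
theorem trace_dist_le_purifiedDist_le (ρ σ : Matrix ι ι ℂ)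
    (hρ : IsSubnormalized ρ) (hσ : IsSubnormalized σ) :
    (1 / 2) * traceNorm (ρ - σ) ≤ purifiedDist ρ σ ∧
      purifiedDist ρ σ ≤ Real.sqrt (traceNorm (ρ - σ) + |ρ.trace.re - σ.trace.re|) := by
  classical
  obtain ⟨hρp, hρt⟩ := hρ
  obtain ⟨hσp, hσt⟩ := hσ
  have hH : (ρ - σ).IsHermitian := hρp.1.sub hσp.1
  set lam : ι → ℝ := hH.eigenvalues with hlam
  set T := traceNorm (ρ - σ) with hTdef
  set a := ρ.trace.re with hadef
  set b := σ.trace.re with hbdef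
  set t := a - b with htdef
  -- spectral projector onto nonnegative eigenvalues of ρ - σ
  set g : ι → ℝ := fun i => if 0 ≤ lam i then 1 else 0 with hgdef
  set M := cdiag hH g with hMdef
  have hMh : M.IsHermitian := cdiag_hermitian _ _
  have hMi : M * M = M := by
    rw [hMdef, cdiag_mul]
    have h1 : (fun i => g i * g i) = g := by
      funext i; rw [hgdef]; dsimp only; split <;> norm_num
    rw [h1]
  have hNh : ((1 : Matrix ι ι ℂ) - M).IsHermitian := Matrix.isHermitian_one.sub hMh
  have hNi : ((1 : Matrix ι ι ℂ) - M) * ((1 : Matrix ι ι ℂ) - M) = (1 : Matrix ι ι ℂ) - M := by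
    have h : ((1 : Matrix ι ι ℂ) - M) * (1 - M) = 1 - M - (M - M * M) := by noncomm_ring
    rw [h, hMi, sub_self, sub_zero]
  -- quantities
  set p1 := (M * ρ).trace.re with hp1def
  set q1 := (M * σ).trace.re with hq1def
  set p2 := (((1 : Matrix ι ι ℂ) - M) * ρ).trace.re with hp2def
  set q2 := (((1 : Matrix ι ι ℂ) - M) * σ).trace.re with hq2def
  have hp1 : 0 ≤ p1 := trace_idem_psd_nonneg hρp hMh hMi
  have hq1 : 0 ≤ q1 := trace_idem_psd_nonneg hσp hMh hMi
  have hp2 : 0 ≤ p2 := trace_idem_psd_nonneg hρp hNh hNi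
  have hq2 : 0 ≤ q2 := trace_idem_psd_nonneg hσp hNh hNi
  have hp3 : 0 ≤ 1 - a := by linarith
  have hq3 : 0 ≤ 1 - b := by linarith
  -- sums of probabilities
  have hpsum : p1 + p2 = a := by
    have h1 : M * ρ + ((1 : Matrix ι ι ℂ) - M) * ρ = ρ := by noncomm_ring
    have h2 := congrArg (fun Y => Matrix.trace Y) h1
    simp only [Matrix.trace_add] at h2
    have h3 := congrArg Complex.re h2
    rw [Complex.add_re] at h3
    exact h3
  have hqsum : q1 + q2 = b := by
    have h1 : M * σ + ((1 : Matrix ι ι ℂ) - M) * σ = σ := by noncomm_ring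
    have h2 := congrArg (fun Y => Matrix.trace Y) h1
    simp only [Matrix.trace_add] at h2
    have h3 := congrArg Complex.re h2
    rw [Complex.add_re] at h3
    exact h3
  -- eigenvalue sums
  have hTsum : T = ∑ i, |lam i| := traceNorm_hermitian hH
  have htsum : t = ∑ i, lam i := by
    have h1 : (ρ - σ).trace = (cdiag hH lam).trace :=
      congrArg Matrix.trace (spectral' hH)
    rw [trace_cdiag] at h1
    have h2 := congrArg Complex.re h1
    rw [Matrix.trace_sub, Complex.sub_re, Complex.re_sum] at h2
    simpa using h2
  have habs_t : |t| ≤ T := by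
    rw [hTsum, htsum]
    exact Finset.abs_sum_le_sum_abs _ _
  -- p1 - q1
  have hd1 : p1 - q1 = (T + t) / 2 := by
    have h1 : M * ρ - M * σ = M * (ρ - σ) := by noncomm_ring
    have h2 : (M * (ρ - σ)).trace.re = ∑ i, max (lam i) 0 := by
      rw [hMdef, cdiag_mul_self, trace_cdiag, Complex.re_sum]
      refine Finset.sum_congr rfl fun i _ => ?_
      rw [Complex.ofReal_re, hgdef]
      dsimp only
      rcases le_or_gt 0 (lam i) with h0 | h0
      · rw [if_pos h0, one_mul, max_eq_left h0]
      · rw [if_neg (not_le.mpr h0), zero_mul, max_eq_right (le_of_lt h0)]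
    have h3 : p1 - q1 = (M * (ρ - σ)).trace.re := by
      rw [← h1, Matrix.trace_sub, Complex.sub_re]
    have h4 : ∑ i, max (lam i) 0 = (T + t) / 2 := by
      rw [hTsum, htsum, ← Finset.sum_add_distrib, Finset.sum_div]
      refine Finset.sum_congr rfl fun i _ => ?_
      rw [max_formula]
      rw [sub_zero, add_zero]
      ring
    rw [h3, h2, h4]
  have hd2 : p2 - q2 = (t - T) / 2 := by
    have : (p1 + p2) - (q1 + q2) = t := by rw [hpsum, hqsum]
    linarith
  -- fidelity facts
  set F := fidelity ρ σ with hFdef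
  have hF0 : 0 ≤ F := traceNorm_nonneg _
  have hFsplit := fidelity_le_split hρp hσp hMh hMi
  -- Powers-Stormer lower bound on fidelity
  have hPS : a + b - T ≤ 2 * F := by
    have h1 := powers_stormer hρp hσp
    have h2 : (msqrt ρ * msqrt σ).trace.re ≤ F := re_trace_le_traceNorm _
    rw [← hTdef] at h1
    linarith
  -- generalized fidelity
  set Fb := genFid ρ σ with hFbdef
  have hFb_eq : Fb = F + Real.sqrt ((1 - a) * (1 - b)) := rfl
  have hFb0 : 0 ≤ Fb := by
    rw [hFb_eq]
    have := Real.sqrt_nonneg ((1 - a) * (1 - b))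
    linarith
  -- classical bound
  have hclass : Fb ^ 2 + ((T + |t|) / 2) ^ 2 ≤ 1 := by
    have habs1 : |p1 - q1| = (T + t) / 2 := by
      rw [hd1, abs_of_nonneg (by cases abs_le.mp habs_t; linarith)]
    have habs2 : |p2 - q2| = (T - t) / 2 := by
      rw [hd2, abs_of_nonpos (by cases abs_le.mp habs_t; linarith)]
      ring
    have habs3 : |(1 - a) - (1 - b)| = |t| := by
      rw [show (1 - a) - (1 - b) = -t by ring, abs_neg]
    have hFb_le : Fb ≤ Real.sqrt p1 * Real.sqrt q1 + Real.sqrt p2 * Real.sqrt q2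
        + Real.sqrt (1 - a) * Real.sqrt (1 - b) := by
      rw [hFb_eq, Real.sqrt_mul hp3]
      exact add_le_add_left hFsplit _
    have h := classical_fvdg hp1 hp2 hp3 hq1 hq2 hq3 (by linarith) (by linarith) hFb0 hFb_le
    rw [habs1, habs2, habs3] at h
    have heq : ((T + t) / 2 + (T - t) / 2 + |t|) / 2 = (T + |t|) / 2 := by ring
    rwa [heq] at h
  have hTV0 : 0 ≤ (T + |t|) / 2 := by
    have h0T : 0 ≤ T := traceNorm_nonneg _
    have := abs_nonneg t
    linarith
  have hpd : purifiedDist ρ σ = Real.sqrt (1 - Fb ^ 2) := rfl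
  constructor
  · -- lower bound
    rw [hpd]
    have h1 : ((T + |t|) / 2) ^ 2 ≤ 1 - Fb ^ 2 := by linarith
    calc (1 / 2) * T ≤ (T + |t|) / 2 := by
          have := abs_nonneg t; linarith
    _ = Real.sqrt (((T + |t|) / 2) ^ 2) := (Real.sqrt_sq hTV0).symm
    _ ≤ Real.sqrt (1 - Fb ^ 2) := Real.sqrt_le_sqrt h1
  · -- upper bound
    rw [hpd]
    have hFb1 : Fb ≤ 1 := by
      nlinarith only [hclass, hFb0, sq_nonneg ((T + |t|) / 2)]
    have hming : 1 - (a + b) / 2 - |t| / 2 ≤ Real.sqrt ((1 - a) * (1 - b)) := by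
      have h1 := min_le_sqrt_mul hp3 hq3
      have h2 : min (1 - a) (1 - b) = 1 - (a + b) / 2 - |t| / 2 := by
        rw [min_formula, show (1 - a) - (1 - b) = -t by ring, abs_neg]
        ring
      rw [h2] at h1
      exact h1
    have hFblow : 1 - (T + |t|) / 2 ≤ Fb := by
      rw [hFb_eq]
      linarith only [hming, hPS]
    have h2 : 1 - Fb ^ 2 ≤ T + |t| := by
      have hm : (1 - Fb) * (1 + Fb) ≤ ((T + |t|) / 2) * 2 :=
        mul_le_mul (by linarith only [hFblow]) (by linarith only [hFb1])
          (by linarith only [hFb0]) hTV0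
      nlinarith only [hm]
    exact Real.sqrt_le_sqrt h2

end QIT
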